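/- arXiv:2208.06508 — 5 statements merged into one kernel-verified Lean document; each statement's English description precedes it below -/
import Mathlib

section
/- Let η be a finite measure on ℝⁿ, m : ℝⁿ → [0,1] be measurable, θ ∈ ℝⁿ, and α ∈ ℝ. Suppose that if α ≥ 0 then ∫ m dη ≤ η({x : ⟨x,θ⟩ ≥ α}), and if α < 0 then ∫ m dη ≥ η({x : ⟨x,θ⟩ ≥ α}). Then ∫ ⟨x,θ⟩ m(x) dη(x) ≤ ∫ ⟨x,θ⟩ 𝟙{⟨x,θ⟩ ≥ α} dη(x). -/
open MeasureTheory

/-- If `m : ℝⁿ → [0,1]` and `α` is such that the total mass of `m` is dominated by the mass of the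
halfspace `{⟨x,θ⟩ ≥ α}` (when `α ≥ 0`, with the reverse inequality when `α < 0`), then the
`θ`-directional first moment of `m` is dominated by that of the halfspace indicator. -/
theorem stmt1 (n : ℕ) (η : Measure (EuclideanSpace ℝ (Fin n))) [IsFiniteMeasure η]
    (m : EuclideanSpace ℝ (Fin n) → ℝ) (hm_meas : Measurable m)
    (hm0 : ∀ x, 0 ≤ m x) (hm1 : ∀ x, m x ≤ 1)
    (θ : EuclideanSpace ℝ (Fin n)) (α : ℝ)
    (hint : Integrable (fun x => (inner ℝ x θ : ℝ)) η)
    (h1 : 0 ≤ α → ∫ x, m x ∂η ≤ (η {x | α ≤ (inner ℝ x θ : ℝ)}).toReal)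
    (h2 : α < 0 → (η {x | α ≤ (inner ℝ x θ : ℝ)}).toReal ≤ ∫ x, m x ∂η) :
    ∫ x, (inner ℝ x θ : ℝ) * m x ∂η
      ≤ ∫ x in {x | α ≤ (inner ℝ x θ : ℝ)}, (inner ℝ x θ : ℝ) ∂η := by
  set f : EuclideanSpace ℝ (Fin n) → ℝ := fun x => inner ℝ x θ with hf_def
  have hf_meas : Measurable f := (continuous_id.inner continuous_const).measurable
  set S := {x | α ≤ f x} with hS_def
  have hS : MeasurableSet S := measurableSet_le measurable_const hf_meas
  have hm_int : Integrable m η := by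
    refine (integrable_const (1:ℝ)).mono' hm_meas.aestronglyMeasurable ?_
    filter_upwards with x
    rw [Real.norm_eq_abs, abs_le]
    exact ⟨by linarith [hm0 x], hm1 x⟩
  have hfm_int : Integrable (fun x => f x * m x) η := by
    refine hint.abs.mono' (hf_meas.mul hm_meas).aestronglyMeasurable ?_
    filter_upwards with x
    rw [Real.norm_eq_abs, abs_mul]
    calc |f x| * |m x| ≤ |f x| * 1 := by
          gcongr
          rw [abs_le]; exact ⟨by linarith [hm0 x], hm1 x⟩
      _ = |f x| := mul_one _
  have hg_int : Integrable (fun x => f x * (1 - m x)) η := by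
    have h := hint.sub hfm_int
    exact h.congr (Filter.Eventually.of_forall fun x => by simp [mul_sub])
  have key1 : ∫ x in Sᶜ, f x * m x ∂η ≤ α * ∫ x in Sᶜ, m x ∂η := by
    rw [← integral_const_mul]
    refine setIntegral_mono_on hfm_int.integrableOn
      (hm_int.const_mul α).integrableOn hS.compl ?_
    intro x hx
    have hfx : f x < α := lt_of_not_ge hx
    exact mul_le_mul_of_nonneg_right hfx.le (hm0 x)
  have key2 : α * ∫ x in S, (1 - m x) ∂η ≤ ∫ x in S, f x * (1 - m x) ∂η := by
    rw [← integral_const_mul]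
    refine setIntegral_mono_on
      (((integrable_const (1:ℝ)).sub hm_int).const_mul α).integrableOn
      hg_int.integrableOn hS ?_
    intro x hx
    have hfx : α ≤ f x := hx
    exact mul_le_mul_of_nonneg_right hfx (by linarith [hm1 x])
  have hcompl_m : ∫ x in S, m x ∂η + ∫ x in Sᶜ, m x ∂η = ∫ x, m x ∂η :=
    integral_add_compl hS hm_int
  have hconst : ∫ _ in S, (1:ℝ) ∂η = (η S).toReal := by
    simp [integral_const, Measure.real]
  have hS1m : ∫ x in S, (1 - m x) ∂η = (η S).toReal - ∫ x in S, m x ∂η := by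
    rw [integral_sub (integrableOn_const (C := (1:ℝ)) (measure_ne_top η S))
      hm_int.integrableOn, hconst]
  have key3 : α * ∫ x in Sᶜ, m x ∂η ≤ α * ∫ x in S, (1 - m x) ∂η := by
    rw [hS1m]
    rcases le_or_gt 0 α with hα | hα
    · have := h1 hα; nlinarith
    · have := h2 hα; nlinarith
  calc ∫ x, f x * m x ∂η
      = ∫ x in S, f x * m x ∂η + ∫ x in Sᶜ, f x * m x ∂η :=
        (integral_add_compl hS hfm_int).symm
    _ ≤ ∫ x in S, f x * m x ∂η + ∫ x in S, f x * (1 - m x) ∂η :=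
        add_le_add le_rfl (key1.trans (key3.trans key2))
    _ = ∫ x in S, f x ∂η := by
        rw [← integral_add hfm_int.integrableOn hg_int.integrableOn]
        apply integral_congr_ae
        filter_upwards with x using by ring
end

section
/- Let I(s) = Φ'(Φ⁻¹(s)) denote the Gaussian isoperimetric profile, where Φ is the standard Gaussian cumulative distribution function and Φ' the standard Gaussian density. Then for all s ∈ [0,1], I(s) ≥ s(1−s). -/
open MeasureTheory Real Set Filter Topology

/-- The standard Gaussian density. -/
noncomputable def gaussPDF (x : ℝ) : ℝ := Real.exp (-x ^ 2 / 2) / Real.sqrt (2 * Real.pi)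

/-- The standard Gaussian cumulative distribution function. -/
noncomputable def gaussCDF (x : ℝ) : ℝ := ∫ t in Set.Iic x, gaussPDF t

lemma gaussPDF_pos (x : ℝ) : 0 < gaussPDF x := by
  have := Real.pi_pos
  unfold gaussPDF; positivity

lemma gaussPDF_eq : gaussPDF = fun x => Real.exp (-(1/2) * x ^ 2) / Real.sqrt (2 * Real.pi) := by
  funext x; unfold gaussPDF; ring_nf

lemma gaussPDF_integrable : Integrable gaussPDF := by
  rw [gaussPDF_eq]
  exact (integrable_exp_neg_mul_sq (by norm_num)).div_const _

lemma gaussPDF_integral : ∫ x, gaussPDF x = 1 := by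
  rw [gaussPDF_eq]
  rw [MeasureTheory.integral_div, integral_gaussian]
  rw [show Real.pi / (1/2) = 2 * Real.pi by ring, div_self]
  have := Real.pi_pos
  positivity

lemma gaussCDF_nonneg (x : ℝ) : 0 ≤ gaussCDF x :=
  setIntegral_nonneg measurableSet_Iic (fun t _ => (gaussPDF_pos t).le)

lemma gaussCDF_le_one (x : ℝ) : gaussCDF x ≤ 1 := by
  rw [← gaussPDF_integral]
  exact setIntegral_le_integral gaussPDF_integrable (ae_of_all _ fun t => (gaussPDF_pos t).le)

lemma gaussCDF_add_Ioi (x : ℝ) : gaussCDF x + ∫ t in Set.Ioi x, gaussPDF t = 1 := by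
  rw [gaussCDF, intervalIntegral.integral_Iic_add_Ioi gaussPDF_integrable.integrableOn
    gaussPDF_integrable.integrableOn, gaussPDF_integral]

lemma gaussPDF_neg (x : ℝ) : gaussPDF (-x) = gaussPDF x := by
  unfold gaussPDF; ring_nf

lemma gaussCDF_neg (x : ℝ) : gaussCDF (-x) = 1 - gaussCDF x := by
  have h1 : gaussCDF (-x) = ∫ t in Set.Iic (-x), gaussPDF (-t) := by
    rw [gaussCDF]; exact setIntegral_congr_fun measurableSet_Iic fun t _ => (gaussPDF_neg t).symm
  rw [h1, integral_comp_neg_Iic, neg_neg]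
  have := gaussCDF_add_Ioi x
  linarith

lemma integral_t_exp (x : ℝ) :
    ∫ t in Set.Ioi x, t * Real.exp (-t ^ 2 / 2) = Real.exp (-x ^ 2 / 2) := by
  have hderiv : ∀ t ∈ Set.Ici x, HasDerivAt (fun t : ℝ => -Real.exp (-t ^ 2 / 2))
      (t * Real.exp (-t ^ 2 / 2)) t := by
    intro t _
    have h1 : HasDerivAt (fun t : ℝ => -t ^ 2 / 2) (-t) t := by
      have := ((hasDerivAt_pow 2 t).neg.div_const 2)
      exact this.congr_deriv (by ring)
    have := (h1.exp).neg
    exact this.congr_deriv (by ring)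
  have hint : IntegrableOn (fun t : ℝ => t * Real.exp (-t ^ 2 / 2)) (Set.Ioi x) := by
    have : Integrable (fun t : ℝ => t * Real.exp (-(1/2) * t ^ 2)) :=
      integrable_mul_exp_neg_mul_sq (by norm_num)
    have h2 : (fun t : ℝ => t * Real.exp (-t ^ 2 / 2)) =
        fun t : ℝ => t * Real.exp (-(1/2) * t ^ 2) := by funext t; ring_nf
    rw [h2]; exact this.integrableOn
  have htend : Tendsto (fun t : ℝ => -Real.exp (-t ^ 2 / 2)) atTop (𝓝 0) := by
    have h1 : Tendsto (fun t : ℝ => -t ^ 2 / 2) atTop atBot := by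
      have h0 := (tendsto_pow_atTop (by norm_num : 2 ≠ 0)).atTop_div_const
        (by norm_num : (0:ℝ) < 2) (l := atTop) (f := fun t : ℝ => t ^ 2)
      have h2 := tendsto_neg_atTop_atBot.comp h0
      exact h2.congr fun t => by simp [Function.comp]; ring
    have := (Real.tendsto_exp_atBot.comp h1).neg
    simpa using this
  have := MeasureTheory.integral_Ioi_of_hasDerivAt_of_tendsto'
    (fun t ht => hderiv t ht) hint htend
  rw [this]; simp

lemma tail_le (x : ℝ) (hx : 1 ≤ x) : ∫ t in Set.Ioi x, gaussPDF t ≤ gaussPDF x := by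
  have h1 : ∫ t in Set.Ioi x, gaussPDF t
      = (∫ t in Set.Ioi x, Real.exp (-t ^ 2 / 2)) / Real.sqrt (2 * Real.pi) := by
    rw [← integral_div]; rfl
  have h2 : (∫ t in Set.Ioi x, Real.exp (-t ^ 2 / 2))
      ≤ ∫ t in Set.Ioi x, t * Real.exp (-t ^ 2 / 2) := by
    apply setIntegral_mono_on
    · have : Integrable (fun t : ℝ => Real.exp (-(1/2) * t ^ 2)) :=
        integrable_exp_neg_mul_sq (by norm_num)
      have h3 : (fun t : ℝ => Real.exp (-t ^ 2 / 2)) =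
          fun t : ℝ => Real.exp (-(1/2) * t ^ 2) := by funext t; ring_nf
      rw [h3]; exact this.integrableOn
    · have : Integrable (fun t : ℝ => t * Real.exp (-(1/2) * t ^ 2)) :=
        integrable_mul_exp_neg_mul_sq (by norm_num)
      have h3 : (fun t : ℝ => t * Real.exp (-t ^ 2 / 2)) =
          fun t : ℝ => t * Real.exp (-(1/2) * t ^ 2) := by funext t; ring_nf
      rw [h3]; exact this.integrableOn
    · exact measurableSet_Ioi
    · intro t ht
      nlinarith [Real.exp_pos (-t ^ 2 / 2), ht.out, hx]
  rw [h1]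
  unfold gaussPDF
  have hc : (0:ℝ) ≤ Real.sqrt (2 * Real.pi) := Real.sqrt_nonneg _
  rw [← integral_t_exp x]
  exact div_le_div_of_nonneg_right h2 hc

lemma gaussCDF_sub (x y : ℝ) : gaussCDF y - gaussCDF x = ∫ t in x..y, gaussPDF t :=
  intervalIntegral.integral_Iic_sub_Iic gaussPDF_integrable.integrableOn
    gaussPDF_integrable.integrableOn

lemma gaussCDF_zero : gaussCDF 0 = 1 / 2 := by
  have := gaussCDF_neg 0
  rw [neg_zero] at this
  linarith

lemma middle_lower (x : ℝ) (h0 : 0 ≤ x) (h1 : x ≤ 1) :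
    1 / 2 + x * gaussPDF 1 ≤ gaussCDF x := by
  have hsub := gaussCDF_sub 0 x
  rw [gaussCDF_zero] at hsub
  have hmono : ∫ t in (0:ℝ)..x, gaussPDF 1 ≤ ∫ t in (0:ℝ)..x, gaussPDF t := by
    apply intervalIntegral.integral_mono_on h0
    · exact intervalIntegrable_const
    · exact gaussPDF_integrable.intervalIntegrable
    · intro t ht
      unfold gaussPDF
      have ht2 : t ^ 2 ≤ 1 := by nlinarith [ht.1, ht.2]
      have he : Real.exp (-1 ^ 2 / 2) ≤ Real.exp (-t ^ 2 / 2) := by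
        apply Real.exp_le_exp.mpr; nlinarith
      exact div_le_div_of_nonneg_right he (Real.sqrt_nonneg _)
  rw [intervalIntegral.integral_const, smul_eq_mul, sub_zero] at hmono
  linarith

lemma middle_upper (x : ℝ) (h0 : -1 ≤ x) (h1 : x ≤ 0) :
    gaussCDF x ≤ 1 / 2 + x * gaussPDF 1 := by
  have := middle_lower (-x) (by linarith) (by linarith)
  rw [gaussCDF_neg] at this
  linarith

lemma sqrt2pi_sq : Real.sqrt (2 * Real.pi) ^ 2 = 2 * Real.pi :=
  Real.sq_sqrt (by positivity)

lemma sqrt2pi_lb : 2.5 ≤ Real.sqrt (2 * Real.pi) := by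
  have h := sqrt2pi_sq
  have h2 := Real.sqrt_nonneg (2 * Real.pi)
  nlinarith [Real.pi_gt_d6]

lemma sqrt2pi_ub : Real.sqrt (2 * Real.pi) ≤ 2.5067 := by
  rw [show (2.5067:ℝ) = Real.sqrt (2.5067 ^ 2) from (Real.sqrt_sq (by norm_num)).symm]
  apply Real.sqrt_le_sqrt
  nlinarith [Real.pi_lt_d4]

lemma gaussPDF_one_sq : gaussPDF 1 ^ 2 * Real.sqrt (2 * Real.pi) ^ 2 * Real.exp 1 = 1 := by
  have hc : Real.sqrt (2 * Real.pi) ≠ 0 := by nlinarith [sqrt2pi_lb]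
  have h1 : gaussPDF 1 * Real.sqrt (2 * Real.pi) = Real.exp (-(1/2)) := by
    unfold gaussPDF; rw [div_mul_cancel₀ _ hc]; norm_num
  have h2 : gaussPDF 1 ^ 2 * Real.sqrt (2 * Real.pi) ^ 2
      = (gaussPDF 1 * Real.sqrt (2 * Real.pi)) ^ 2 := by ring
  rw [h2, h1, sq, ← Real.exp_add, ← Real.exp_add]
  norm_num

lemma gaussPDF_lb (x : ℝ) : (1 - x ^ 2 / 2) / Real.sqrt (2 * Real.pi) ≤ gaussPDF x := by
  unfold gaussPDF
  have h := Real.add_one_le_exp (-x ^ 2 / 2)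
  have hc : (0:ℝ) < Real.sqrt (2 * Real.pi) := by nlinarith [sqrt2pi_lb]
  apply div_le_div_of_nonneg_right _ hc.le
  linarith

lemma key_nonneg (x : ℝ) (hx : 0 ≤ x) : gaussCDF x * (1 - gaussCDF x) ≤ gaussPDF x := by
  rcases le_total 1 x with hx1 | hx1
  · have h1 := gaussCDF_add_Ioi x
    have h2 := tail_le x hx1
    have h3 := gaussCDF_nonneg x
    have h4 := gaussCDF_le_one x
    nlinarith
  · set c := Real.sqrt (2 * Real.pi) with hcdef
    set a := gaussCDF x with hadef
    set p := gaussPDF 1 with hpdef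
    have ha1 : 1 / 2 + x * p ≤ a := middle_lower x hx hx1
    have ha2 : a ≤ 1 := gaussCDF_le_one x
    have hp0 : 0 ≤ p := (gaussPDF_pos 1).le
    have hφ : (1 - x ^ 2 / 2) / c ≤ gaussPDF x := gaussPDF_lb x
    have hclb : 2.5 ≤ c := sqrt2pi_lb
    have hcub : c ≤ 2.5067 := sqrt2pi_ub
    have hcpos : (0:ℝ) < c := by linarith
    have hp2 : p ^ 2 * c ^ 2 * Real.exp 1 = 1 := gaussPDF_one_sq
    have helb : 2.7182818283 < Real.exp 1 := Real.exp_one_gt_d9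
    have heub : Real.exp 1 < 2.7182818286 := Real.exp_one_lt_d9
    -- p^2 * c is about 0.1468
    have hp2c_lb : 0.1467 ≤ p ^ 2 * c := by
      nlinarith [sq_nonneg p, mul_pos hcpos (Real.exp_pos 1)]
    -- step 1 : a (1-a) ≤ 1/4 - x^2 p^2
    have step1 : a * (1 - a) ≤ 1 / 4 - x ^ 2 * p ^ 2 := by
      nlinarith [mul_nonneg hx hp0]
    -- step 2 : 1/4 - x^2 p^2 ≤ (1 - x^2/2)/c
    have step2 : 1 / 4 - x ^ 2 * p ^ 2 ≤ (1 - x ^ 2 / 2) / c := by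
      rw [le_div_iff₀ hcpos]
      have hx2 : x ^ 2 ≤ 1 := by nlinarith
      nlinarith [sq_nonneg x, mul_le_mul_of_nonneg_left hp2c_lb (sq_nonneg x)]
    linarith

lemma key (x : ℝ) : gaussCDF x * (1 - gaussCDF x) ≤ gaussPDF x := by
  rcases le_total 0 x with hx | hx
  · exact key_nonneg x hx
  · have h := key_nonneg (-x) (by linarith)
    rw [gaussCDF_neg, gaussPDF_neg] at h
    nlinarith

lemma gaussCDF_continuous : Continuous gaussCDF := by
  have h : Continuous fun b => ∫ t in (0:ℝ)..b, gaussPDF t :=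
    intervalIntegral.continuous_primitive
      (fun a b => gaussPDF_integrable.intervalIntegrable) 0
  have h2 : gaussCDF = fun b => gaussCDF 0 + ∫ t in (0:ℝ)..b, gaussPDF t := by
    funext b
    have := gaussCDF_sub 0 b
    linarith
  rw [h2]
  exact continuous_const.add h

lemma gaussCDF_tendsto_atTop : Tendsto gaussCDF atTop (𝓝 1) := by
  have h := MeasureTheory.intervalIntegral_tendsto_integral_Ioi 0
    gaussPDF_integrable.integrableOn tendsto_id
  have h2 : Tendsto (fun b => gaussCDF 0 + ∫ t in (0:ℝ)..b, gaussPDF t) atTop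
      (𝓝 (gaussCDF 0 + ∫ t in Set.Ioi 0, gaussPDF t)) := tendsto_const_nhds.add h
  have h3 : gaussCDF 0 + ∫ t in Set.Ioi 0, gaussPDF t = 1 := gaussCDF_add_Ioi 0
  rw [h3] at h2
  refine h2.congr fun b => ?_
  have := gaussCDF_sub 0 b
  linarith

lemma gaussCDF_tendsto_atBot : Tendsto gaussCDF atBot (𝓝 0) := by
  have h := MeasureTheory.intervalIntegral_tendsto_integral_Iic 0
    gaussPDF_integrable.integrableOn tendsto_id
  have h2 : Tendsto (fun a => gaussCDF 0 - ∫ t in a..(0:ℝ), gaussPDF t) atBot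
      (𝓝 (gaussCDF 0 - ∫ t in Set.Iic 0, gaussPDF t)) := tendsto_const_nhds.sub h
  have h3 : gaussCDF 0 - ∫ t in Set.Iic 0, gaussPDF t = 0 := by
    rw [show (∫ t in Set.Iic 0, gaussPDF t) = gaussCDF 0 from rfl]; ring
  rw [h3] at h2
  refine h2.congr fun a => ?_
  have := gaussCDF_sub a 0
  linarith

lemma gaussCDF_surj (s : ℝ) (h0 : 0 < s) (h1 : s < 1) : ∃ x, gaussCDF x = s := by
  obtain ⟨b, hb⟩ := (gaussCDF_tendsto_atTop.eventually (eventually_gt_nhds h1)).exists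
  obtain ⟨a, ha⟩ := (gaussCDF_tendsto_atBot.eventually (eventually_lt_nhds h0)).exists
  have hs : s ∈ Set.uIcc (gaussCDF a) (gaussCDF b) :=
    Set.mem_uIcc.mpr (Or.inl ⟨ha.le, hb.le⟩)
  obtain ⟨x, _, hx⟩ := intermediate_value_uIcc gaussCDF_continuous.continuousOn hs
  exact ⟨x, hx⟩

/-- The inverse of the standard Gaussian CDF. -/
noncomputable def gaussCDFInv : ℝ → ℝ := Function.invFun gaussCDF

/-- The Gaussian isoperimetric profile `I(s) = Φ'(Φ⁻¹(s))`, with `I(0) = I(1) = 0`. -/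
noncomputable def isoProfile (s : ℝ) : ℝ :=
  if s = 0 ∨ s = 1 then 0 else gaussPDF (gaussCDFInv s)

/-- The Gaussian isoperimetric profile satisfies `I(s) ≥ s(1-s)` on `[0,1]`. -/
theorem stmt3 (s : ℝ) (hs : s ∈ Set.Icc (0 : ℝ) 1) : s * (1 - s) ≤ isoProfile s := by
  rcases eq_or_ne s 0 with rfl | h0
  · simp [isoProfile]
  rcases eq_or_ne s 1 with rfl | h1
  · simp [isoProfile]
  have hs0 : 0 < s := lt_of_le_of_ne hs.1 (Ne.symm h0)
  have hs1 : s < 1 := lt_of_le_of_ne hs.2 h1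
  have hinv : gaussCDF (gaussCDFInv s) = s :=
    Function.invFun_eq (gaussCDF_surj s hs0 hs1)
  rw [isoProfile, if_neg (by push_neg; exact ⟨h0, h1⟩)]
  calc s * (1 - s) = gaussCDF (gaussCDFInv s) * (1 - gaussCDF (gaussCDFInv s)) := by rw [hinv]
    _ ≤ gaussPDF (gaussCDFInv s) := key _
end

section
/- Let δ ∈ [0,1] and let X be a random variable taking values in [-1,1] with E[X] = 0, E[X³] = 0, and E[X²] = 1 − e^{-t}, where δ = e^{-t} for some t ≥ 0. Then for any a with |a| < 1, E[|1 + aX|^{2+δ}]^{2/(2+δ)} ≤ 1 + a² = E[(1 + aY)²], where Y is uniform on {−1,1}. -/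
open MeasureTheory

section Aux
open Real

-- derivative of (1+u)^p for p ≥ 1
lemma hasDerivAt_one_add_rpow (p : ℝ) (hp : 1 ≤ p) (u : ℝ) :
    HasDerivAt (fun u : ℝ => (1+u)^p) (p * (1+u)^(p-1)) u := by
  have h := (Real.hasDerivAt_rpow_const (x := 1+u) (p := p) (Or.inr hp)).comp u
    ((hasDerivAt_id u).const_add 1)
  exact h.congr_deriv (mul_one _)

lemma aux_h_mono (δ : ℝ) (h0 : 0 ≤ δ) (h1 : δ ≤ 1) :
    MonotoneOn (fun u : ℝ => 1 + (1+δ)*u + (1+δ)*δ/2*u^2 - (1+u)^(1+δ)) (Set.Ici (-1 : ℝ)) := by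
  have hF : ∀ u : ℝ, HasDerivAt (fun u : ℝ => 1 + (1+δ)*u + (1+δ)*δ/2*u^2 - (1+u)^(1+δ))
      ((1+δ) * (1 + δ*u - (1+u)^δ)) u := by
    intro u
    have h1' := hasDerivAt_one_add_rpow (1+δ) (by linarith) u
    have h2' : HasDerivAt (fun u : ℝ => 1 + (1+δ)*u + (1+δ)*δ/2*u^2)
        ((1+δ) + (1+δ)*δ/2*(2*u)) u := by
      have := (((hasDerivAt_id u).const_mul (1+δ)).const_add 1).add
        (((hasDerivAt_pow 2 u)).const_mul ((1+δ)*δ/2))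
      refine this.congr_deriv ?_
      ring
    have := h2'.sub h1'
    refine this.congr_deriv ?_
    have : (1:ℝ)+δ-1 = δ := by ring
    rw [this]
    ring
  apply monotoneOn_of_deriv_nonneg (convex_Ici _)
  · have hdiff : Differentiable ℝ (fun u : ℝ => 1 + (1+δ)*u + (1+δ)*δ/2*u^2 - (1+u)^(1+δ)) :=
      fun u => (hF u).differentiableAt
    exact hdiff.continuous.continuousOn
  · intro x hx
    exact ((hF x).differentiableAt).differentiableWithinAt
  · intro x hx
    rw [(hF x).deriv]
    rw [interior_Ici] at hx
    have hx' : (-1:ℝ) ≤ x := le_of_lt hx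
    have hb := rpow_one_add_le_one_add_mul_self hx' h0 h1
    nlinarith

lemma taylor3 (δ : ℝ) (h0 : 0 ≤ δ) (h1 : δ ≤ 1) {u : ℝ} (hu : -1 ≤ u) :
    (1+u)^(2+δ) ≤ 1 + (2+δ)*u + (2+δ)*(1+δ)/2*u^2 + (2+δ)*(1+δ)*δ/6*u^3 := by
  set h : ℝ → ℝ := fun u : ℝ => 1 + (1+δ)*u + (1+δ)*δ/2*u^2 - (1+u)^(1+δ) with hh
  have hmono := aux_h_mono δ h0 h1
  have hzero : h 0 = 0 := by simp [hh]
  set G : ℝ → ℝ := fun u : ℝ =>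
    1 + (2+δ)*u + (2+δ)*(1+δ)/2*u^2 + (2+δ)*(1+δ)*δ/6*u^3 - (1+u)^(2+δ) with hG
  have hF : ∀ u : ℝ, HasDerivAt G ((2+δ) * h u) u := by
    intro u
    have h1' := hasDerivAt_one_add_rpow (2+δ) (by linarith) u
    have h2' : HasDerivAt (fun u : ℝ => 1 + (2+δ)*u + (2+δ)*(1+δ)/2*u^2 + (2+δ)*(1+δ)*δ/6*u^3)
        ((2+δ) + (2+δ)*(1+δ)/2*(2*u) + (2+δ)*(1+δ)*δ/6*(3*u^2)) u := by
      have := ((((hasDerivAt_id u).const_mul (2+δ)).const_add 1).add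
        (((hasDerivAt_pow 2 u)).const_mul ((2+δ)*(1+δ)/2))).add
        (((hasDerivAt_pow 3 u)).const_mul ((2+δ)*(1+δ)*δ/6))
      refine this.congr_deriv ?_
      push_cast
      ring
    have := h2'.sub h1'
    refine this.congr_deriv ?_
    have he : (2:ℝ)+δ-1 = 1+δ := by ring
    rw [he]
    simp only [hh]
    ring
  have hdiff : Differentiable ℝ G := fun u => (hF u).differentiableAt
  have hG0 : G 0 = 0 := by simp [hG]
  have key : 0 ≤ G u := by
    rcases le_total 0 u with hu0 | hu0
    · have hmonoG : MonotoneOn G (Set.Ici (0:ℝ)) := by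
        apply monotoneOn_of_deriv_nonneg (convex_Ici _) hdiff.continuous.continuousOn
          (fun x hx => (hdiff x).differentiableWithinAt)
        intro x hx
        rw [interior_Ici] at hx
        rw [(hF x).deriv]
        have hxpos : (0:ℝ) < x := hx
        have hx0 : (0:ℝ) ≤ h x :=
          hzero.symm.trans_le (hmono (Set.mem_Ici.mpr (by norm_num : (-1:ℝ) ≤ 0))
            (Set.mem_Ici.mpr (by linarith : (-1:ℝ) ≤ x)) hxpos.le)
        positivity
      have := hmonoG (Set.mem_Ici.mpr le_rfl) (Set.mem_Ici.mpr hu0) hu0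
      rwa [hG0] at this
    · have hantiG : AntitoneOn G (Set.Icc (-1:ℝ) 0) := by
        apply antitoneOn_of_deriv_nonpos (convex_Icc _ _) hdiff.continuous.continuousOn
          (fun x hx => (hdiff x).differentiableWithinAt)
        intro x hx
        rw [interior_Icc] at hx
        rw [(hF x).deriv]
        have hx0 : h x ≤ 0 :=
          le_of_le_of_eq (hmono (Set.mem_Ici.mpr hx.1.le)
            (Set.mem_Ici.mpr (by norm_num : (-1:ℝ) ≤ 0)) hx.2.le) hzero
        have : (0:ℝ) ≤ 2 + δ := by linarith
        nlinarith
      have := hantiG (Set.mem_Icc.mpr ⟨hu, hu0⟩) (Set.mem_Icc.mpr ⟨by norm_num, le_rfl⟩) hu0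
      rw [hG0] at this
      linarith
  simp only [hG] at key
  linarith

end Aux

/-- One-dimensional hypercontractive base case: if `X ∈ [-1,1]` has mean `0`, third moment `0`
and second moment `1 - e^{-t}`, and `δ = e^{-t}`, then for `|a| < 1`,
`E[|1 + aX|^{2+δ}]^{2/(2+δ)} ≤ 1 + a² = E[(1 + aY)²]` with `Y` uniform on `{-1,1}`. -/
theorem stmt7 {Ω : Type*} [MeasurableSpace Ω] (μ : Measure Ω) [IsProbabilityMeasure μ]
    (X : Ω → ℝ) (hX : AEMeasurable X μ)
    (t δ : ℝ) (ht : 0 ≤ t) (hδ : δ = Real.exp (-t))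
    (hrange : ∀ᵐ ω ∂μ, X ω ∈ Set.Icc (-1 : ℝ) 1)
    (h1 : ∫ ω, X ω ∂μ = 0) (h3 : ∫ ω, (X ω) ^ 3 ∂μ = 0)
    (h2 : ∫ ω, (X ω) ^ 2 ∂μ = 1 - Real.exp (-t))
    (a : ℝ) (ha : |a| < 1) :
    (∫ ω, |1 + a * X ω| ^ (2 + δ) ∂μ) ^ (2 / (2 + δ)) ≤ 1 + a ^ 2
      ∧ 1 + a ^ 2 = ((1 + a * 1) ^ 2 + (1 + a * (-1)) ^ 2) / 2 := by
  refine ⟨?_, by ring⟩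
  have hδ0 : 0 < δ := hδ ▸ Real.exp_pos _
  have hδ1 : δ ≤ 1 := by
    rw [hδ]; exact Real.exp_le_one_iff.mpr (by linarith)
  have h2δ : (0:ℝ) < 2 + δ := by linarith
  have hXr : ∀ᵐ ω ∂μ, |X ω| ≤ 1 := hrange.mono fun ω h => abs_le.mpr ⟨h.1, h.2⟩
  -- integrability of moments
  have hX1 : Integrable X μ := by
    refine (integrable_const (1:ℝ)).mono' hX.aestronglyMeasurable ?_
    simpa [Real.norm_eq_abs] using hXr
  have hX2 : Integrable (fun ω => (X ω)^2) μ := by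
    refine (integrable_const (1:ℝ)).mono' (hX.pow_const 2).aestronglyMeasurable ?_
    refine hXr.mono fun ω h => ?_
    rw [Real.norm_eq_abs, abs_pow]
    exact pow_le_one₀ (abs_nonneg _) h
  have hX3 : Integrable (fun ω => (X ω)^3) μ := by
    refine (integrable_const (1:ℝ)).mono' (hX.pow_const 3).aestronglyMeasurable ?_
    refine hXr.mono fun ω h => ?_
    rw [Real.norm_eq_abs, abs_pow]
    exact pow_le_one₀ (abs_nonneg _) h
  -- the integrand
  have hmeasI : AEMeasurable (fun ω => |1 + a * X ω| ^ (2+δ)) μ :=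
    ((Real.continuous_rpow_const h2δ.le).comp continuous_abs).measurable.comp_aemeasurable
      ((hX.const_mul a).const_add 1)
  have hIint : Integrable (fun ω => |1 + a * X ω| ^ (2+δ)) μ := by
    refine (integrable_const ((2:ℝ)^(2+δ))).mono' hmeasI.aestronglyMeasurable ?_
    refine hXr.mono fun ω h => ?_
    rw [Real.norm_eq_abs, abs_of_nonneg (Real.rpow_nonneg (abs_nonneg _) _)]
    apply Real.rpow_le_rpow (abs_nonneg _) _ h2δ.le
    have : |a * X ω| ≤ 1 := by
      rw [abs_mul]
      calc |a| * |X ω| ≤ 1 * 1 := by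
            apply mul_le_mul ha.le h (abs_nonneg _) zero_le_one
        _ = 1 := by norm_num
    calc |1 + a * X ω| ≤ |(1:ℝ)| + |a * X ω| := abs_add_le _ _
      _ ≤ 2 := by rw [abs_one]; linarith
  -- pointwise Taylor bound
  have hpt : ∀ᵐ ω ∂μ, |1 + a * X ω| ^ (2+δ) ≤
      1 + ((2+δ)*a) * X ω + ((2+δ)*(1+δ)/2*a^2) * (X ω)^2
        + ((2+δ)*(1+δ)*δ/6*a^3) * (X ω)^3 := by
    refine hXr.mono fun ω h => ?_
    have habs : |a * X ω| < 1 := by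
      rw [abs_mul]
      calc |a| * |X ω| ≤ |a| * 1 := by
            apply mul_le_mul_of_nonneg_left h (abs_nonneg _)
        _ < 1 := by rwa [mul_one]
    have hu : -1 ≤ a * X ω := by
      have := neg_abs_le (a * X ω); linarith
    have hposw : 0 < 1 + a * X ω := by
      have := neg_abs_le (a * X ω); linarith
    rw [abs_of_pos hposw]
    calc (1 + a * X ω) ^ (2+δ) ≤ 1 + (2+δ)*(a * X ω) + (2+δ)*(1+δ)/2*(a * X ω)^2
          + (2+δ)*(1+δ)*δ/6*(a * X ω)^3 := taylor3 δ hδ0.le hδ1 hu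
      _ = 1 + ((2+δ)*a) * X ω + ((2+δ)*(1+δ)/2*a^2) * (X ω)^2
          + ((2+δ)*(1+δ)*δ/6*a^3) * (X ω)^3 := by ring
  -- bound the integral
  have hPint : Integrable (fun ω => 1 + ((2+δ)*a) * X ω + ((2+δ)*(1+δ)/2*a^2) * (X ω)^2
      + ((2+δ)*(1+δ)*δ/6*a^3) * (X ω)^3) μ :=
    (((integrable_const 1).add (hX1.const_mul _)).add (hX2.const_mul _)).add (hX3.const_mul _)
  have hIle : ∫ ω, |1 + a * X ω| ^ (2+δ) ∂μ ≤ 1 + (2+δ)*(1+δ)/2*a^2*(1-δ) := by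
    calc ∫ ω, |1 + a * X ω| ^ (2+δ) ∂μ
        ≤ ∫ ω, (1 + ((2+δ)*a) * X ω + ((2+δ)*(1+δ)/2*a^2) * (X ω)^2
            + ((2+δ)*(1+δ)*δ/6*a^3) * (X ω)^3) ∂μ := integral_mono_ae hIint hPint hpt
      _ = 1 + (2+δ)*(1+δ)/2*a^2*(1-δ) := by
          have e3 : Integrable (fun ω => ((2+δ)*(1+δ)*δ/6*a^3) * (X ω)^3) μ := hX3.const_mul _
          have e2 : Integrable (fun ω => ((2+δ)*(1+δ)/2*a^2) * (X ω)^2) μ := hX2.const_mul _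
          have e1 : Integrable (fun ω => ((2+δ)*a) * X ω) μ := hX1.const_mul _
          have e12 : Integrable (fun ω => 1 + ((2+δ)*a) * X ω) μ :=
            (integrable_const 1).add e1
          have e123 : Integrable
              (fun ω => 1 + ((2+δ)*a) * X ω + ((2+δ)*(1+δ)/2*a^2) * (X ω)^2) μ := e12.add e2
          rw [integral_add e123 e3, integral_add e12 e2, integral_add (integrable_const 1) e1,
            integral_const_mul, integral_const_mul, integral_const_mul, h1, h2, h3,
            integral_const, ← hδ]
          simp [measure_univ]
  have hInn : 0 ≤ ∫ ω, |1 + a * X ω| ^ (2+δ) ∂μ :=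
    integral_nonneg fun ω => Real.rpow_nonneg (abs_nonneg _) _
  have hp0 : 0 ≤ 2/(2+δ) := by positivity
  have hp1 : 2/(2+δ) ≤ 1 := by rw [div_le_one h2δ]; linarith
  have hs0 : 0 ≤ (2+δ)*(1+δ)/2*a^2*(1-δ) := by
    apply mul_nonneg (mul_nonneg (by positivity) (sq_nonneg a)) (by linarith)
  calc (∫ ω, |1 + a * X ω| ^ (2 + δ) ∂μ) ^ (2 / (2 + δ))
      ≤ (1 + (2+δ)*(1+δ)/2*a^2*(1-δ)) ^ (2/(2+δ)) :=
        Real.rpow_le_rpow hInn hIle hp0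
    _ ≤ 1 + (2/(2+δ)) * ((2+δ)*(1+δ)/2*a^2*(1-δ)) :=
        rpow_one_add_le_one_add_mul_self (by linarith) hp0 hp1
    _ = 1 + (1-δ^2)*a^2 := by field_simp; ring
    _ ≤ 1 + a^2 := by nlinarith [sq_nonneg a, sq_nonneg (δ*a)]
end

section
/- Let x ∈ (−1,1)ⁿ and let Y = (Y₁,...,Yₙ) be a random vector with independent coordinates, where each Yᵢ takes value 1 with probability (1+xᵢ)/2 and −1 with probability (1−xᵢ)/2. For g : {−1,1}ⁿ → ℝ with multilinear extension g, one has g(x) ≥ g(x)² + Σᵢ (1−xᵢ²)(∂ᵢg(x))², provided g takes values in {0,1} on {−1,1}ⁿ. Here ∂ᵢg denotes the partial derivative of the multilinear extension. -/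
namespace Stmt11Aux

noncomputable def yb (b : Bool) : ℝ := if b then 1 else -1

@[simp] lemma yb_true : yb true = 1 := rfl
@[simp] lemma yb_false : yb false = -1 := rfl

noncomputable def W {n : ℕ} (x : Fin n → ℝ) (s : Fin n → Bool) : ℝ :=
  ∏ i, (1 + x i * yb (s i)) / 2

lemma master {n : ℕ} (f : Fin n → Bool → ℝ) :
    ∑ s : Fin n → Bool, ∏ i, f i (s i) = ∏ i, (f i true + f i false) := by
  have h : ∀ i : Fin n, f i true + f i false = ∑ b : Bool, f i b := by
    intro i; simp [Fintype.sum_bool]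
  simp_rw [h]
  rw [Finset.prod_univ_sum, Fintype.piFinset_univ]

lemma prodform {n : ℕ} (x : Fin n → ℝ) (φ : Fin n → Bool → ℝ) :
    ∑ s : Fin n → Bool, W x s * ∏ i, φ i (s i)
      = ∏ i, ((1 + x i) / 2 * φ i true + (1 - x i) / 2 * φ i false) := by
  have h1 : ∀ s : Fin n → Bool, W x s * ∏ i, φ i (s i)
      = ∏ i, ((1 + x i * yb (s i)) / 2 * φ i (s i)) := by
    intro s; rw [W, ← Finset.prod_mul_distrib]
  simp_rw [h1]
  rw [master fun i b => (1 + x i * yb b) / 2 * φ i b]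
  refine Finset.prod_congr rfl fun i _ => ?_
  rw [yb_true, yb_false]; ring

lemma momA {n : ℕ} (x : Fin n → ℝ) (A : Finset (Fin n)) :
    ∑ s : Fin n → Bool, W x s * ∏ j ∈ A, yb (s j) = ∏ j ∈ A, x j := by
  have h1 : ∀ s : Fin n → Bool, ∏ j ∈ A, yb (s j)
      = ∏ j, (if j ∈ A then yb (s j) else 1) := by
    intro s
    rw [Finset.prod_ite_mem, Finset.univ_inter]
  simp_rw [h1]
  have hp := prodform x (fun j b => if j ∈ A then yb b else 1)
  beta_reduce at hp
  rw [hp]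
  rw [show (∏ j ∈ A, x j) = ∏ j, (if j ∈ A then x j else 1) by
    rw [Finset.prod_ite_mem, Finset.univ_inter]]
  refine Finset.prod_congr rfl fun i _ => ?_
  by_cases h : i ∈ A <;> simp [h] <;> ring

lemma momAd {n : ℕ} (x : Fin n → ℝ) (A : Finset (Fin n)) (i0 : Fin n) :
    ∑ s : Fin n → Bool, W x s * ((∏ j ∈ A, yb (s j)) * (yb (s i0) - x i0))
      = if i0 ∈ A then (1 - x i0 ^ 2) * ∏ j ∈ A.erase i0, x j else 0 := by
  have h1 : ∀ s : Fin n → Bool, (∏ j ∈ A, yb (s j)) * (yb (s i0) - x i0)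
      = ∏ j, ((if j ∈ A then yb (s j) else 1) * (if j = i0 then yb (s j) - x i0 else 1)) := by
    intro s
    rw [Finset.prod_mul_distrib, Finset.prod_ite_mem, Finset.univ_inter,
      Finset.prod_ite_eq']
    simp
  simp_rw [h1]
  have hp := prodform x (fun j b => (if j ∈ A then yb b else 1) * (if j = i0 then yb b - x i0 else 1))
  beta_reduce at hp
  rw [hp]
  by_cases hi : i0 ∈ A
  · rw [if_pos hi]
    have h2 : ∀ i : Fin n,
        (1 + x i) / 2 * ((if i ∈ A then yb true else 1) * (if i = i0 then yb true - x i0 else 1))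
          + (1 - x i) / 2 * ((if i ∈ A then yb false else 1) * (if i = i0 then yb false - x i0 else 1))
        = (if i = i0 then 1 - x i0 ^ 2 else 1) * (if i ∈ A.erase i0 then x i else 1) := by
      intro i
      rcases eq_or_ne i i0 with rfl | hne
      · simp [hi]; ring
      · by_cases h : i ∈ A <;> simp [h, hne, Finset.mem_erase] <;> ring
    simp_rw [h2]
    rw [Finset.prod_mul_distrib, Finset.prod_ite_eq', Finset.prod_ite_mem, Finset.univ_inter]
    simp
  · rw [if_neg hi]
    apply Finset.prod_eq_zero (Finset.mem_univ i0)
    simp [hi]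
    ring

lemma hW1 {n : ℕ} (x : Fin n → ℝ) : ∑ s : Fin n → Bool, W x s = 1 := by
  have := momA x (∅ : Finset (Fin n))
  simpa using this

lemma momD {n : ℕ} (x : Fin n → ℝ) (i : Fin n) :
    ∑ s : Fin n → Bool, W x s * (yb (s i) - x i) = 0 := by
  have := momAd x (∅ : Finset (Fin n)) i
  simpa using this

lemma momDD {n : ℕ} (x : Fin n → ℝ) (i j : Fin n) :
    ∑ s : Fin n → Bool, W x s * ((yb (s i) - x i) * (yb (s j) - x j))
      = if i = j then 1 - x i ^ 2 else 0 := by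
  have h1 : ∀ s : Fin n → Bool, W x s * ((yb (s i) - x i) * (yb (s j) - x j))
      = W x s * ((∏ k ∈ ({j} : Finset (Fin n)), yb (s k)) * (yb (s i) - x i))
        - x j * (W x s * (yb (s i) - x i)) := by
    intro s; rw [Finset.prod_singleton]; ring
  simp_rw [h1]
  rw [Finset.sum_sub_distrib, momAd, ← Finset.mul_sum, momD, mul_zero, sub_zero]
  rcases eq_or_ne i j with rfl | hne
  · simp
  · simp [hne, Finset.mem_singleton]

end Stmt11Aux

open Stmt11Aux


/-- Biased Parseval inequality: if the multilinear polynomial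
`G(x) = ∑_A c(A) ∏_{i∈A} x_i` takes values in `{0,1}` on the Boolean cube `{-1,1}ⁿ`, then for
every `x ∈ (-1,1)ⁿ`, `G(x) ≥ G(x)² + ∑_i (1-x_i²)(∂_i G(x))²`, where
`∂_i G(x) = ∑_{A ∋ i} c(A) ∏_{j ∈ A\{i}} x_j` is the partial derivative of `G`. -/
theorem stmt11 (n : ℕ) (c : Finset (Fin n) → ℝ) (G : (Fin n → ℝ) → ℝ)
    (hG : ∀ x, G x = ∑ A : Finset (Fin n), c A * ∏ i ∈ A, x i)
    (hBool : ∀ x : Fin n → ℝ, (∀ i, x i = 1 ∨ x i = -1) → G x = 0 ∨ G x = 1)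
    (x : Fin n → ℝ) (hx : ∀ i, x i ∈ Set.Ioo (-1 : ℝ) 1) :
    G x ≥ (G x) ^ 2 + ∑ i : Fin n, (1 - (x i) ^ 2) *
      (∑ A ∈ Finset.univ.filter (fun A : Finset (Fin n) => i ∈ A),
        c A * ∏ j ∈ A.erase i, x j) ^ 2 := by
  set b : Fin n → ℝ := fun i =>
    ∑ A ∈ Finset.univ.filter (fun A : Finset (Fin n) => i ∈ A),
      c A * ∏ j ∈ A.erase i, x j with hb
  set g : (Fin n → Bool) → ℝ := fun s => G (fun i => yb (s i)) with hgdef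
  set L : (Fin n → Bool) → ℝ := fun s => ∑ i, b i * (yb (s i) - x i) with hLdef
  set S : ℝ := ∑ i, (1 - x i ^ 2) * b i ^ 2 with hS
  -- expectation of g
  have hg : ∑ s : Fin n → Bool, W x s * g s = G x := by
    have h1 : ∀ s : Fin n → Bool, W x s * g s
        = ∑ A : Finset (Fin n), c A * (W x s * ∏ j ∈ A, yb (s j)) := by
      intro s
      rw [hgdef]; beta_reduce; rw [hG, Finset.mul_sum]
      exact Finset.sum_congr rfl fun A _ => by ring
    simp_rw [h1]
    rw [Finset.sum_comm, hG x]
    exact Finset.sum_congr rfl fun A _ => by rw [← Finset.mul_sum, momA]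
  -- E[g^2] = E[g]
  have hgg : ∑ s : Fin n → Bool, W x s * (g s * g s) = G x := by
    rw [← hg]
    refine Finset.sum_congr rfl fun s _ => ?_
    have hb01 : g s = 0 ∨ g s = 1 := by
      apply hBool
      intro i
      cases h : s i <;> simp [h]
    rcases hb01 with h | h <;> rw [h] <;> ring
  -- E[g · d_i]
  have hgd : ∀ i0 : Fin n,
      ∑ s : Fin n → Bool, W x s * (g s * (yb (s i0) - x i0)) = (1 - x i0 ^ 2) * b i0 := by
    intro i0
    have h1 : ∀ s : Fin n → Bool, W x s * (g s * (yb (s i0) - x i0))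
        = ∑ A : Finset (Fin n), c A
            * (W x s * ((∏ j ∈ A, yb (s j)) * (yb (s i0) - x i0))) := by
      intro s
      rw [hgdef]; beta_reduce; rw [hG, Finset.sum_mul, Finset.mul_sum]
      exact Finset.sum_congr rfl fun A _ => by ring
    simp_rw [h1]
    rw [Finset.sum_comm]
    have h2 : ∀ A : Finset (Fin n),
        ∑ s : Fin n → Bool, c A * (W x s * ((∏ j ∈ A, yb (s j)) * (yb (s i0) - x i0)))
        = if i0 ∈ A then c A * ((1 - x i0 ^ 2) * ∏ j ∈ A.erase i0, x j) else 0 := by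
      intro A
      rw [← Finset.mul_sum, momAd]
      rcases em (i0 ∈ A) with h | h <;> simp [h]
    simp_rw [h2]
    simp only [hb]
    rw [Finset.mul_sum, Finset.sum_filter]
    exact Finset.sum_congr rfl fun A _ => by rcases em (i0 ∈ A) with h | h <;> simp [h] <;> ring
  -- E[W L] = 0
  have hWL : ∑ s : Fin n → Bool, W x s * L s = 0 := by
    have h1 : ∀ s : Fin n → Bool, W x s * L s
        = ∑ i, b i * (W x s * (yb (s i) - x i)) := by
      intro s
      rw [hLdef]; beta_reduce; rw [Finset.mul_sum]
      exact Finset.sum_congr rfl fun i _ => by ring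
    simp_rw [h1]
    rw [Finset.sum_comm]
    refine Finset.sum_eq_zero fun i _ => ?_
    rw [← Finset.mul_sum, momD, mul_zero]
  -- E[W g L] = S
  have hWgL : ∑ s : Fin n → Bool, W x s * (g s * L s) = S := by
    have h1 : ∀ s : Fin n → Bool, W x s * (g s * L s)
        = ∑ i, b i * (W x s * (g s * (yb (s i) - x i))) := by
      intro s
      rw [hLdef]; beta_reduce; rw [Finset.mul_sum, Finset.mul_sum]
      exact Finset.sum_congr rfl fun i _ => by ring
    simp_rw [h1]
    rw [Finset.sum_comm, hS]
    refine Finset.sum_congr rfl fun i _ => ?_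
    rw [← Finset.mul_sum, hgd i]
    ring
  -- E[W L L] = S
  have hWLL : ∑ s : Fin n → Bool, W x s * (L s * L s) = S := by
    have h1 : ∀ s : Fin n → Bool, W x s * (L s * L s)
        = ∑ i, ∑ j, (b i * b j) * (W x s * ((yb (s i) - x i) * (yb (s j) - x j))) := by
      intro s
      rw [hLdef]; beta_reduce
      rw [Finset.sum_mul_sum, Finset.mul_sum]
      refine Finset.sum_congr rfl fun i _ => ?_
      rw [Finset.mul_sum]
      exact Finset.sum_congr rfl fun j _ => by ring
    simp_rw [h1]
    rw [Finset.sum_comm, hS]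
    refine Finset.sum_congr rfl fun i _ => ?_
    rw [Finset.sum_comm]
    have h2 : ∀ j : Fin n,
        ∑ s : Fin n → Bool, (b i * b j) * (W x s * ((yb (s i) - x i) * (yb (s j) - x j)))
          = if i = j then b i * b j * (1 - x i ^ 2) else 0 := by
      intro j
      rw [← Finset.mul_sum, momDD]
      rcases eq_or_ne i j with rfl | h
      · simp
      · simp [h]
    simp_rw [h2]
    rw [Finset.sum_ite_eq]
    simp
    ring
  -- nonnegativity
  have hWnn : ∀ s : Fin n → Bool, 0 ≤ W x s := by
    intro s
    refine Finset.prod_nonneg fun i _ => ?_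
    cases h : s i <;> simp only [h, yb_true, yb_false] <;>
      [linarith [(hx i).2]; linarith [(hx i).1]]
  have h0 : 0 ≤ ∑ s : Fin n → Bool, W x s * (g s - G x - L s) ^ 2 :=
    Finset.sum_nonneg fun s _ => mul_nonneg (hWnn s) (sq_nonneg _)
  have key : ∀ s : Fin n → Bool, W x s * (g s - G x - L s) ^ 2
      = W x s * (g s * g s) + (G x) ^ 2 * W x s + W x s * (L s * L s)
        - 2 * G x * (W x s * g s) - 2 * (W x s * (g s * L s))
        + 2 * G x * (W x s * L s) := by
    intro s; ring
  rw [Finset.sum_congr rfl fun s _ => key s] at h0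
  simp only [Finset.sum_add_distrib, Finset.sum_sub_distrib, ← Finset.mul_sum] at h0
  rw [hgg, hg, hW1, hWLL, hWgL, hWL] at h0
  rw [ge_iff_le]
  nlinarith [h0]
end

section
/- Let g : {−1,1}ⁿ → {0,1} with multilinear extension to [−1,1]ⁿ. Then for every x ∈ (−1,1)ⁿ, g(x)(1 − g(x)) ≥ Σ_{i=1}^n (1 − xᵢ²)(∂ᵢ g(x))². -/
open Finset

namespace Stmt12Aux
noncomputable def chi (b : Bool) : ℝ := if b then 1 else -1

lemma chi_sq (b : Bool) : chi b * chi b = 1 := by cases b <;> simp [chi]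

variable {n : ℕ}

noncomputable def w (x : Fin n → ℝ) (y : Fin n → Bool) : ℝ := ∏ i, (1 + x i * chi (y i)) / 2

lemma moment (x : Fin n → ℝ) (A : Finset (Fin n)) :
    ∑ y : Fin n → Bool, w x y * ∏ i ∈ A, chi (y i) = ∏ i ∈ A, x i := by
  have h1 : ∀ y : Fin n → Bool,
      w x y * ∏ i ∈ A, chi (y i)
        = ∏ i, ((1 + x i * chi (y i)) / 2 * if i ∈ A then chi (y i) else 1) := by
    intro y
    rw [w, Finset.prod_mul_distrib]
    congr 1
    rw [Finset.prod_ite_mem, Finset.univ_inter]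
  simp_rw [h1]
  rw [← Fintype.prod_sum (fun (i : Fin n) (b : Bool) => (1 + x i * chi b) / 2 * if i ∈ A then chi b else 1)]
  have h2 : ∀ i : Fin n, (∑ b : Bool, ((1 + x i * chi b) / 2 * if i ∈ A then chi b else 1))
      = if i ∈ A then x i else 1 := by
    intro i
    rw [Fintype.sum_bool]
    by_cases h : i ∈ A <;> simp [chi, h] <;> ring
  simp_rw [h2]
  rw [Finset.prod_ite_mem, Finset.univ_inter]

lemma Ew (x : Fin n → ℝ) : ∑ y : Fin n → Bool, w x y = 1 := by
  simpa using moment x ∅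

lemma Eprodchi (x : Fin n → ℝ) (A : Finset (Fin n)) (i : Fin n) :
    ∑ y : Fin n → Bool, w x y * ((∏ j ∈ A, chi (y j)) * chi (y i))
      = if i ∈ A then ∏ j ∈ A.erase i, x j else x i * ∏ j ∈ A, x j := by
  by_cases h : i ∈ A
  · have h1 : ∀ y : Fin n → Bool, (∏ j ∈ A, chi (y j)) * chi (y i)
        = ∏ j ∈ A.erase i, chi (y j) := by
      intro y
      rw [← Finset.mul_prod_erase A _ h]
      rw [mul_comm (chi (y i)) _, mul_assoc, chi_sq, mul_one]
    simp_rw [h1, moment x (A.erase i), if_pos h]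
  · have h1 : ∀ y : Fin n → Bool, (∏ j ∈ A, chi (y j)) * chi (y i)
        = ∏ j ∈ insert i A, chi (y j) := by
      intro y
      rw [Finset.prod_insert h, mul_comm]
    simp_rw [h1, moment x (insert i A), if_neg h, Finset.prod_insert h]

lemma Echi (x : Fin n → ℝ) (i : Fin n) :
    ∑ y : Fin n → Bool, w x y * chi (y i) = x i := by
  simpa using moment x {i}

lemma Echi2 (x : Fin n → ℝ) (i j : Fin n) :
    ∑ y : Fin n → Bool, w x y * (chi (y i) * chi (y j)) = if i = j then 1 else x i * x j := by
  by_cases h : i = j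
  · subst h
    rw [if_pos rfl]
    simp_rw [chi_sq, mul_one]
    exact Ew x
  · rw [if_neg h]
    have := Eprodchi x {i} j
    rw [if_neg (by simp only [Finset.mem_singleton]; exact fun hh => h hh.symm)] at this
    simp only [Finset.prod_singleton] at this
    rw [this, mul_comm]

noncomputable def u (x : Fin n → ℝ) (i : Fin n) (y : Fin n → Bool) : ℝ := chi (y i) - x i

lemma Eu (x : Fin n → ℝ) (i : Fin n) :
    ∑ y : Fin n → Bool, w x y * u x i y = 0 := by
  have h1 : ∀ y : Fin n → Bool, w x y * u x i y = w x y * chi (y i) - x i * w x y := by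
    intro y; rw [u]; ring
  simp_rw [h1]
  rw [Finset.sum_sub_distrib, ← Finset.mul_sum, Echi, Ew, mul_one, sub_self]

lemma Euu (x : Fin n → ℝ) (i j : Fin n) :
    ∑ y : Fin n → Bool, w x y * (u x i y * u x j y)
      = if i = j then 1 - x i ^ 2 else 0 := by
  have h1 : ∀ y : Fin n → Bool, w x y * (u x i y * u x j y)
      = w x y * (chi (y i) * chi (y j)) - x j * (w x y * chi (y i))
        - x i * (w x y * chi (y j)) + (x i * x j) * w x y := by
    intro y; simp only [u]; ring
  simp_rw [h1]
  rw [Finset.sum_add_distrib, Finset.sum_sub_distrib, Finset.sum_sub_distrib,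
    ← Finset.mul_sum, ← Finset.mul_sum, ← Finset.mul_sum, Echi2, Echi, Echi, Ew]
  by_cases h : i = j
  · subst h; simp; ring
  · rw [if_neg h, if_neg h]; ring


lemma Et (x : Fin n → ℝ) (c : Finset (Fin n) → ℝ) :
    ∑ y : Fin n → Bool, w x y * (∑ A : Finset (Fin n), c A * ∏ j ∈ A, chi (y j))
      = ∑ A : Finset (Fin n), c A * ∏ j ∈ A, x j := by
  simp_rw [Finset.mul_sum]
  rw [Finset.sum_comm]
  refine Finset.sum_congr rfl fun A _ => ?_
  have h : ∀ y : Fin n → Bool, w x y * (c A * ∏ j ∈ A, chi (y j))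
      = c A * (w x y * ∏ j ∈ A, chi (y j)) := fun y => by ring
  simp_rw [h, ← Finset.mul_sum, moment]

lemma Etu (x : Fin n → ℝ) (c : Finset (Fin n) → ℝ) (i : Fin n) :
    ∑ y : Fin n → Bool, w x y * ((∑ A : Finset (Fin n), c A * ∏ j ∈ A, chi (y j)) * u x i y)
      = (1 - x i ^ 2) * ∑ A ∈ Finset.univ.filter (fun A : Finset (Fin n) => i ∈ A),
          c A * ∏ j ∈ A.erase i, x j := by
  have h1 : ∀ y : Fin n → Bool,
      w x y * ((∑ A : Finset (Fin n), c A * ∏ j ∈ A, chi (y j)) * u x i y)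
        = ∑ A : Finset (Fin n), (c A * (w x y * ((∏ j ∈ A, chi (y j)) * chi (y i)))
            - (c A * x i) * (w x y * ∏ j ∈ A, chi (y j))) := by
    intro y
    rw [Finset.sum_mul, Finset.mul_sum]
    refine Finset.sum_congr rfl fun A _ => ?_
    rw [u]; ring
  simp_rw [h1]
  rw [Finset.sum_comm]
  have h2 : ∀ A : Finset (Fin n),
      (∑ y : Fin n → Bool, (c A * (w x y * ((∏ j ∈ A, chi (y j)) * chi (y i)))
          - (c A * x i) * (w x y * ∏ j ∈ A, chi (y j))))
        = if i ∈ A then c A * ((1 - x i ^ 2) * ∏ j ∈ A.erase i, x j) else 0 := by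
    intro A
    rw [Finset.sum_sub_distrib, ← Finset.mul_sum, ← Finset.mul_sum, Eprodchi, moment]
    by_cases h : i ∈ A
    · rw [if_pos h, if_pos h, ← Finset.mul_prod_erase A x h]
      ring
    · rw [if_neg h, if_neg h]
      ring
  simp_rw [h2]
  rw [← Finset.sum_filter, Finset.mul_sum]
  exact Finset.sum_congr rfl fun A _ => by ring

lemma bessel (x : Fin n → ℝ) (t : (Fin n → Bool) → ℝ) (a : Fin n → ℝ) (Gx : ℝ)
    (hw0 : ∀ y, 0 ≤ w x y)
    (ht : ∀ y, t y * t y = t y)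
    (hEt : ∑ y : Fin n → Bool, w x y * t y = Gx)
    (hEtu : ∀ i, ∑ y : Fin n → Bool, w x y * (t y * u x i y) = (1 - x i ^ 2) * a i) :
    Gx * (1 - Gx) ≥ ∑ i, (1 - x i ^ 2) * a i ^ 2 := by
  have hEv : ∑ y : Fin n → Bool, w x y * (∑ i, a i * u x i y) = 0 := by
    simp_rw [Finset.mul_sum]
    rw [Finset.sum_comm]
    refine Finset.sum_eq_zero fun i _ => ?_
    have h : ∀ y : Fin n → Bool, w x y * (a i * u x i y) = a i * (w x y * u x i y) :=
      fun y => by ring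
    simp_rw [h, ← Finset.mul_sum, Eu, mul_zero]
  have hEtv : ∑ y : Fin n → Bool, w x y * (t y * ∑ i, a i * u x i y)
      = ∑ i, (1 - x i ^ 2) * a i ^ 2 := by
    have h1 : ∀ y : Fin n → Bool, w x y * (t y * ∑ i, a i * u x i y)
        = ∑ i, a i * (w x y * (t y * u x i y)) := by
      intro y
      rw [Finset.mul_sum, Finset.mul_sum]
      exact Finset.sum_congr rfl fun i _ => by ring
    simp_rw [h1]
    rw [Finset.sum_comm]
    refine Finset.sum_congr rfl fun i _ => ?_
    rw [← Finset.mul_sum, hEtu i]; ring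
  have hEvv : ∑ y : Fin n → Bool, w x y * ((∑ i, a i * u x i y) * (∑ i, a i * u x i y))
      = ∑ i, (1 - x i ^ 2) * a i ^ 2 := by
    have h1 : ∀ y : Fin n → Bool, w x y * ((∑ i, a i * u x i y) * (∑ j, a j * u x j y))
        = ∑ i, ∑ j, (a i * a j) * (w x y * (u x i y * u x j y)) := by
      intro y
      rw [Finset.sum_mul_sum, Finset.mul_sum]
      refine Finset.sum_congr rfl fun i _ => ?_
      rw [Finset.mul_sum]
      exact Finset.sum_congr rfl fun j _ => by ring
    simp_rw [h1]
    rw [Finset.sum_comm]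
    refine Finset.sum_congr rfl fun i _ => ?_
    rw [Finset.sum_comm]
    have h2 : ∀ j, (∑ y : Fin n → Bool, (a i * a j) * (w x y * (u x i y * u x j y)))
        = if i = j then (a i * a j) * (1 - x i ^ 2) else 0 := by
      intro j
      rw [← Finset.mul_sum, Euu]
      by_cases h : i = j
      · rw [if_pos h, if_pos h]
      · rw [if_neg h, if_neg h, mul_zero]
    simp_rw [h2]
    rw [Finset.sum_ite_eq]
    simp only [Finset.mem_univ, if_true]
    ring
  have hkey : ∀ y : Fin n → Bool, w x y * (t y - Gx - (∑ i, a i * u x i y)) ^ 2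
      = w x y * (t y * t y) - 2 * Gx * (w x y * t y)
        - 2 * (w x y * (t y * ∑ i, a i * u x i y))
        + Gx ^ 2 * w x y + 2 * Gx * (w x y * (∑ i, a i * u x i y))
        + w x y * ((∑ i, a i * u x i y) * (∑ i, a i * u x i y)) := fun y => by ring
  have hpos : (0:ℝ) ≤ ∑ y : Fin n → Bool, w x y * (t y - Gx - (∑ i, a i * u x i y)) ^ 2 :=
    Finset.sum_nonneg fun y _ => mul_nonneg (hw0 y) (sq_nonneg _)
  rw [Finset.sum_congr rfl (fun y _ => hkey y)] at hpos
  rw [Finset.sum_add_distrib, Finset.sum_add_distrib, Finset.sum_add_distrib,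
    Finset.sum_sub_distrib, Finset.sum_sub_distrib,
    ← Finset.mul_sum, ← Finset.mul_sum, ← Finset.mul_sum, ← Finset.mul_sum] at hpos
  have hEt2 : ∑ y : Fin n → Bool, w x y * (t y * t y) = Gx := by
    rw [Finset.sum_congr rfl fun y _ => by rw [ht y]]
    exact hEt
  rw [hEt2, hEt, hEtv, hEv, hEvv, Ew] at hpos
  nlinarith [hpos]

end Stmt12Aux


/-- If the multilinear polynomial `G(x) = ∑_A c(A) ∏_{i∈A} x_i` (the multilinear extension of a
Boolean function) takes values in `{0,1}` on `{-1,1}ⁿ`, then for every `x ∈ (-1,1)ⁿ`,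
`G(x)(1-G(x)) ≥ ∑_i (1-x_i²)(∂_i G(x))²`, where
`∂_i G(x) = ∑_{A ∋ i} c(A) ∏_{j ∈ A\{i}} x_j`. -/
theorem stmt12 (n : ℕ) (c : Finset (Fin n) → ℝ) (G : (Fin n → ℝ) → ℝ)
    (hG : ∀ x, G x = ∑ A : Finset (Fin n), c A * ∏ i ∈ A, x i)
    (hBool : ∀ x : Fin n → ℝ, (∀ i, x i = 1 ∨ x i = -1) → G x = 0 ∨ G x = 1)
    (x : Fin n → ℝ) (hx : ∀ i, x i ∈ Set.Ioo (-1 : ℝ) 1) :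
    G x * (1 - G x) ≥ ∑ i : Fin n, (1 - (x i) ^ 2) *
      (∑ A ∈ Finset.univ.filter (fun A : Finset (Fin n) => i ∈ A),
        c A * ∏ j ∈ A.erase i, x j) ^ 2 := by
  classical
  have hb : ∀ (y : Fin n → Bool) (i : Fin n),
      Stmt12Aux.chi (y i) = 1 ∨ Stmt12Aux.chi (y i) = -1 := fun y i => by
    cases y i <;> simp [Stmt12Aux.chi]
  have hw0 : ∀ y : Fin n → Bool, 0 ≤ Stmt12Aux.w x y := by
    intro y
    refine Finset.prod_nonneg fun i _ => ?_
    have h1 := (hx i).1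
    have h2 := (hx i).2
    rcases hb y i with h | h
    · rw [h, mul_one]; linarith
    · rw [h, mul_neg_one]; linarith
  have ht : ∀ y : Fin n → Bool,
      (∑ A : Finset (Fin n), c A * ∏ j ∈ A, Stmt12Aux.chi (y j))
        * (∑ A : Finset (Fin n), c A * ∏ j ∈ A, Stmt12Aux.chi (y j))
        = ∑ A : Finset (Fin n), c A * ∏ j ∈ A, Stmt12Aux.chi (y j) := by
    intro y
    have hGy := hBool (fun j => Stmt12Aux.chi (y j)) (fun i => hb y i)
    rw [hG] at hGy
    rcases hGy with h | h <;> rw [h] <;> ring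
  have hEt := Stmt12Aux.Et x c
  rw [← hG x] at hEt
  exact Stmt12Aux.bessel x
    (fun y => ∑ A : Finset (Fin n), c A * ∏ j ∈ A, Stmt12Aux.chi (y j))
    (fun i => ∑ A ∈ Finset.univ.filter (fun A : Finset (Fin n) => i ∈ A),
      c A * ∏ j ∈ A.erase i, x j)
    (G x) hw0 ht hEt (fun i => Stmt12Aux.Etu x c i)
end
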